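/- Let P = P_0 + U be a polyhedral set in ℝ^d where U is a linear subspace and P_0 is a polyhedral set contained in an affine subspace whose direction space is orthogonal to U. Then F is a face of P if and only if F = F_0 + U for a unique face F_0 of P_0, and N(P, F_0 + U) = N(P_0, F_0) ∩ U^⊥. -/

import Mathlib

open RealInnerProductSpace Pointwise

noncomputable section

abbrev Euc (d : ℕ) := EuclideanSpace ℝ (Fin d)

/-- A polyhedral set: intersection of finitely many closed half-spaces. -/
def IsPolyhedral {d : ℕ} (P : Set (Euc d)) : Prop :=
  ∃ s : Finset (Euc d × ℝ), P = {x | ∀ h ∈ s, ⟪h.1, x⟫ ≤ h.2}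

/-- A (nonempty) face of a convex set: a nonempty convex extreme subset. -/
def IsFaceOf {d : ℕ} (P F : Set (Euc d)) : Prop :=
  F.Nonempty ∧ Convex ℝ F ∧ IsExtreme ℝ P F

/-- The normal cone of `P` at the face `F`. -/
def normalCone {d : ℕ} (P F : Set (Euc d)) : Set (Euc d) :=
  {u | ∀ f ∈ F, ∀ z ∈ P, ⟪u, z - f⟫ ≤ 0}

/-- The dimension of a set: the rank of the direction of its affine hull. -/
def sdim {d : ℕ} (F : Set (Euc d)) : ℕ :=
  Module.finrank ℝ (affineSpan ℝ F).direction

/-- φ_P(x) = Σ_{F face of P} (-1)^{dim F} 1_{F - N(P,F)}(x). -/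
def phi {d : ℕ} (P : Set (Euc d)) (x : Euc d) : ℤ :=
  ∑ᶠ F ∈ {F : Set (Euc d) | IsFaceOf P F},
    (-1 : ℤ) ^ sdim F * (F - normalCone P F).indicator (fun _ => (1 : ℤ)) x

/-- A set is line-free if it contains no affine line. -/
def LineFree {d : ℕ} (P : Set (Euc d)) : Prop :=
  ∀ x y : Euc d, y ≠ 0 → ∃ t : ℝ, x + t • y ∉ P

lemma IsPolyhedral.convex' {d : ℕ} {P : Set (Euc d)} (h : IsPolyhedral P) : Convex ℝ P := by
  obtain ⟨s, rfl⟩ := h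
  intro x hx y hy a b ha hb hab
  intro h hs
  have hx' := hx h hs
  have hy' := hy h hs
  calc ⟪h.1, a • x + b • y⟫ = a * ⟪h.1, x⟫ + b * ⟪h.1, y⟫ := by
        rw [inner_add_right, real_inner_smul_right, real_inner_smul_right]
    _ ≤ a * h.2 + b * h.2 := by nlinarith
    _ = h.2 := by rw [← add_mul, hab, one_mul]

theorem faces_of_sum_with_subspace {d : ℕ} (P₀ : Set (Euc d)) (U : Submodule ℝ (Euc d))
    (hP₀ : IsPolyhedral P₀) (hne : P₀.Nonempty)
    (horth : (affineSpan ℝ P₀).direction ≤ Uᗮ) :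
    (∀ F : Set (Euc d),
      IsFaceOf (P₀ + (U : Set (Euc d))) F ↔
        ∃! F₀ : Set (Euc d), IsFaceOf P₀ F₀ ∧ F = F₀ + (U : Set (Euc d))) ∧
    (∀ F₀ : Set (Euc d), IsFaceOf P₀ F₀ →
      normalCone (P₀ + (U : Set (Euc d))) (F₀ + (U : Set (Euc d))) =
        normalCone P₀ F₀ ∩ (Uᗮ : Set (Euc d))) := by
  have hconv : Convex ℝ P₀ := hP₀.convex'
  have hsub : ∀ x ∈ P₀, ∀ y ∈ P₀, x - y ∈ Uᗮ := by
    intro x hx y hy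
    apply horth
    have := AffineSubspace.vsub_mem_direction (subset_affineSpan ℝ P₀ hx)
      (subset_affineSpan ℝ P₀ hy)
    simpa using this
  have hzero : ∀ x : Euc d, x ∈ U → x ∈ Uᗮ → x = 0 := by
    intro x hx hx'
    have := (Submodule.mem_orthogonal U x).mp hx' x hx
    exact inner_self_eq_zero.mp this
  have huniq : ∀ a ∈ P₀, ∀ a' ∈ P₀, ∀ u ∈ U, ∀ u' ∈ U, a + u = a' + u' → a = a' ∧ u = u' := by
    intro a ha a' ha' u hu u' hu' h
    have h1 : a - a' = u' - u := by
      rw [sub_eq_sub_iff_add_eq_add, h, add_comm]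
    have h2 : u' - u = 0 := hzero _ (U.sub_mem hu' hu) (h1 ▸ hsub a ha a' ha')
    have h3 : u = u' := by
      have := sub_eq_zero.mp h2; exact this.symm
    refine ⟨?_, h3⟩
    have : a - a' = 0 := by rw [h1, h2]
    exact sub_eq_zero.mp this
  -- U-invariance of faces of P
  have hinv : ∀ F, IsFaceOf (P₀ + (U : Set (Euc d))) F → ∀ f ∈ F, ∀ u ∈ U, f + u ∈ F := by
    intro F hF f hf u hu
    by_cases h0 : u = 0
    · simpa [h0] using hf
    obtain ⟨a, ha, v, hv, hav⟩ := Set.mem_add.mp (hF.2.2.1 hf)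
    have h1 : f + u ∈ P₀ + (U : Set (Euc d)) := by
      refine Set.mem_add.mpr ⟨a, ha, v + u, U.add_mem hv hu, ?_⟩
      rw [← add_assoc, hav]
    have h2 : f - u ∈ P₀ + (U : Set (Euc d)) := by
      refine Set.mem_add.mpr ⟨a, ha, v - u, U.sub_mem hv hu, ?_⟩
      rw [← hav]; abel
    have hseg : f ∈ openSegment ℝ (f + u) (f - u) := by
      refine ⟨1/2, 1/2, by norm_num, by norm_num, by norm_num, ?_⟩
      module
    exact hF.2.2.2 h1 h2 hf hseg
  constructor
  · intro F
    constructor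
    · intro hF
      have hface : IsFaceOf P₀ (P₀ ∩ F) := by
        refine ⟨?_, hconv.inter hF.2.1, Set.inter_subset_left, ?_⟩
        · obtain ⟨f, hf⟩ := hF.1
          obtain ⟨a, ha, v, hv, hav⟩ := Set.mem_add.mp (hF.2.2.1 hf)
          have : a ∈ F := by
            have := hinv F hF f hf (-v) (U.neg_mem hv)
            have he : f + -v = a := by rw [← hav]; abel
            rwa [he] at this
          exact ⟨a, ha, this⟩
        · intro x1 hx1 x2 hx2 x hx hseg
          have hx1' : x1 ∈ P₀ + (U : Set (Euc d)) := by
            simpa using Set.add_mem_add hx1 U.zero_mem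
          have hx2' : x2 ∈ P₀ + (U : Set (Euc d)) := by
            simpa using Set.add_mem_add hx2 U.zero_mem
          have := hF.2.2.2 hx1' hx2' hx.2 hseg
          exact ⟨hx1, this⟩
      have heq : F = (P₀ ∩ F) + (U : Set (Euc d)) := by
        apply Set.Subset.antisymm
        · intro f hf
          obtain ⟨a, ha, v, hv, hav⟩ := Set.mem_add.mp (hF.2.2.1 hf)
          have haF : a ∈ F := by
            have := hinv F hF f hf (-v) (U.neg_mem hv)
            have he : f + -v = a := by rw [← hav]; abel
            rwa [he] at this
          exact Set.mem_add.mpr ⟨a, ⟨ha, haF⟩, v, hv, hav⟩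
        · intro x hx
          obtain ⟨a, ha, v, hv, hav⟩ := Set.mem_add.mp hx
          have := hinv F hF a ha.2 v hv
          rwa [hav] at this
      refine ⟨P₀ ∩ F, ⟨hface, heq⟩, ?_⟩
      rintro G ⟨hG, rfl⟩
      apply Set.Subset.antisymm
      · intro g hg
        refine ⟨hG.2.2.1 hg, ?_⟩
        simpa using Set.add_mem_add hg U.zero_mem
      · intro a ha'
        obtain ⟨ha, haF⟩ := ha'
        obtain ⟨g, hg, v, hv, hgv⟩ := Set.mem_add.mp haF
        have := huniq g (hG.2.2.1 hg) a ha v hv 0 U.zero_mem (by rw [hgv, add_zero])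
        rw [← this.1]; exact hg
    · rintro ⟨F₀, ⟨hF₀, rfl⟩, -⟩
      refine ⟨?_, hF₀.2.1.add U.convex, ?_, ?_⟩
      · obtain ⟨f, hf⟩ := hF₀.1
        exact ⟨f + 0, Set.add_mem_add hf U.zero_mem⟩
      · exact Set.add_subset_add_right hF₀.2.2.1
      · intro x1 hx1 x2 hx2 x hx hseg
        obtain ⟨a1, ha1, u1, hu1, rfl⟩ := Set.mem_add.mp hx1
        obtain ⟨a2, ha2, u2, hu2, rfl⟩ := Set.mem_add.mp hx2
        obtain ⟨f, hf, v, hv, rfl⟩ := Set.mem_add.mp hx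
        obtain ⟨a, b, ha, hb, hab, heq⟩ := hseg
        have hcomb : a • (a1 + u1) + b • (a2 + u2)
            = (a • a1 + b • a2) + (a • u1 + b • u2) := by module
        have hP0 : a • a1 + b • a2 ∈ P₀ := hconv ha1 ha2 ha.le hb.le hab
        have hU : a • u1 + b • u2 ∈ U := U.add_mem (U.smul_mem _ hu1) (U.smul_mem _ hu2)
        have := huniq (a • a1 + b • a2) hP0 f (hF₀.2.2.1 hf) (a • u1 + b • u2) hU v hv
          (by rw [← hcomb, heq])
        have hfseg : f ∈ openSegment ℝ a1 a2 := ⟨a, b, ha, hb, hab, by rw [this.1]⟩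
        have hext := hF₀.2.2.2 ha1 ha2 hf hfseg
        exact Set.add_mem_add hext hu1
  · intro F₀ hF₀
    ext u
    simp only [Set.mem_inter_iff]
    constructor
    · intro hu
      obtain ⟨f, hf⟩ := hF₀.1
      have hfF : f + 0 ∈ F₀ + (U : Set (Euc d)) := Set.add_mem_add hf U.zero_mem
      rw [add_zero] at hfF
      constructor
      · intro g hg z hz
        have hg' : g + 0 ∈ F₀ + (U : Set (Euc d)) := Set.add_mem_add hg U.zero_mem
        have hz' : z + 0 ∈ P₀ + (U : Set (Euc d)) := Set.add_mem_add hz U.zero_mem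
        rw [add_zero] at hg' hz'
        exact hu g hg' z hz'
      · rw [SetLike.mem_coe, Submodule.mem_orthogonal]
        intro w hw
        have h1 := hu f hfF (f + w) (Set.add_mem_add (hF₀.2.2.1 hf) hw)
        have h2 := hu f hfF (f + (-w)) (Set.add_mem_add (hF₀.2.2.1 hf) (U.neg_mem hw))
        rw [add_sub_cancel_left] at h1 h2
        rw [inner_neg_right] at h2
        rw [real_inner_comm]
        linarith
    · rintro ⟨h1, h2⟩ g hg z hz
      obtain ⟨a, ha, v, hv, rfl⟩ := Set.mem_add.mp hg
      obtain ⟨b, hb, w, hw, rfl⟩ := Set.mem_add.mp hz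
      have hsplit : (b + w) - (a + v) = (b - a) + (w - v) := by abel
      rw [hsplit, inner_add_right]
      have e1 := h1 a ha b hb
      have e2 : ⟪w - v, u⟫ = 0 := (Submodule.mem_orthogonal U u).mp h2 (w - v) (U.sub_mem hw hv)
      rw [real_inner_comm] at e2
      linarith
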